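/- The commutator subgroup B_4' of the braid group B_4 is generated by the three elements σ_1σ_2^{−1}, σ_1(σ_1σ_2^{−1})σ_1^{−1}, and σ_1σ_3^{−1}. -/

import Mathlib

/-- Artin braid relators for the braid group on `n` strands, with generators
`FreeGroup.of i` corresponding to `σ_{i+1}` for `i : Fin (n-1)`. -/
def braidRels (n : ℕ) : Set (FreeGroup (Fin (n - 1))) :=
  {r | ∃ i j : Fin (n - 1),
      ((j : ℕ) ≥ (i : ℕ) + 2 ∧
        r = FreeGroup.of i * FreeGroup.of j * (FreeGroup.of i)⁻¹ * (FreeGroup.of j)⁻¹) ∨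
      ((j : ℕ) = (i : ℕ) + 1 ∧
        r = FreeGroup.of i * FreeGroup.of j * FreeGroup.of i *
          (FreeGroup.of j * FreeGroup.of i * FreeGroup.of j)⁻¹)}

/-- The braid group on `n` strands. -/
def BraidGroup (n : ℕ) : Type := PresentedGroup (braidRels n)

instance (n : ℕ) : Group (BraidGroup n) :=
  inferInstanceAs (Group (PresentedGroup (braidRels n)))

/-- The Artin generator `σ_i` of `BraidGroup n`, for `1 ≤ i ≤ n-1` (junk value `1` otherwise). -/
def σ {n : ℕ} (i : ℕ) : BraidGroup n :=
  if h : 1 ≤ i ∧ i < n then PresentedGroup.of (⟨i - 1, by omega⟩ : Fin (n - 1)) else 1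

/-- The element `α = σ_1 σ_2 ⋯ σ_{n-1}`. -/
def α (n : ℕ) : BraidGroup n := ((List.range (n - 1)).map (fun i => σ (i + 1))).prod

/-- The half-twist `σ_j` for an index `j` taken modulo `n`, defined by conjugating
`σ_1` by the rotation `α`: `σ_{1+m} = α^m σ_1 α^{-m}`. -/
def σm {n : ℕ} (j : ℤ) : BraidGroup n := (α n) ^ (j - 1) * σ 1 * (α n) ^ (1 - j)

namespace B4Aux

open Subgroup

lemma sigma_eq {n : ℕ} (i : ℕ) (h1 : 1 ≤ i) (h2 : i < n) :
    (σ i : BraidGroup n) = PresentedGroup.of (⟨i - 1, by omega⟩ : Fin (n - 1)) :=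
  dif_pos ⟨h1, h2⟩

lemma rel_one {r : FreeGroup (Fin 3)} (h : r ∈ braidRels 4) :
    PresentedGroup.mk (braidRels 4) r = 1 :=
  (QuotientGroup.eq_one_iff r).mpr (Subgroup.subset_normalClosure h)

lemma braid_adj (i j : Fin 3) (hij : (j : ℕ) = (i : ℕ) + 1) :
    (PresentedGroup.of i : BraidGroup 4) * .of j * .of i = .of j * .of i * .of j := by
  have h : (FreeGroup.of i * FreeGroup.of j * FreeGroup.of i *
      (FreeGroup.of j * FreeGroup.of i * FreeGroup.of j)⁻¹) ∈ braidRels 4 :=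
    ⟨i, j, Or.inr ⟨hij, rfl⟩⟩
  have h2 := rel_one h
  rw [map_mul, map_mul, map_inv, map_mul, map_mul] at h2
  exact mul_inv_eq_one.mp h2

lemma braid_far (i j : Fin 3) (hij : (j : ℕ) ≥ (i : ℕ) + 2) :
    (PresentedGroup.of i : BraidGroup 4) * .of j = .of j * .of i := by
  have h : (FreeGroup.of i * FreeGroup.of j * (FreeGroup.of i)⁻¹ *
      (FreeGroup.of j)⁻¹) ∈ braidRels 4 := ⟨i, j, Or.inl ⟨hij, rfl⟩⟩
  have h2 := rel_one h
  rw [map_mul, map_mul, map_inv, map_inv, map_mul] at h2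
  have h3 : (PresentedGroup.of i : BraidGroup 4) * .of j * (.of j * .of i)⁻¹ = 1 := by
    rw [mul_inv_rev, ← mul_assoc]; exact h2
  exact mul_inv_eq_one.mp h3

/-- braid relation σ1 σ2 σ1 = σ2 σ1 σ2 -/
lemma hst : (σ 1 : BraidGroup 4) * σ 2 * σ 1 = σ 2 * σ 1 * σ 2 := by
  rw [sigma_eq 1 (by norm_num) (by norm_num), sigma_eq 2 (by norm_num) (by norm_num)]
  exact braid_adj _ _ rfl

/-- braid relation σ2 σ3 σ2 = σ3 σ2 σ3 -/
lemma htu : (σ 2 : BraidGroup 4) * σ 3 * σ 2 = σ 3 * σ 2 * σ 3 := by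
  rw [sigma_eq 2 (by norm_num) (by norm_num), sigma_eq 3 (by norm_num) (by norm_num)]
  exact braid_adj _ _ rfl

/-- commutation σ1 σ3 = σ3 σ1 -/
lemma hsu : (σ 1 : BraidGroup 4) * σ 3 = σ 3 * σ 1 := by
  rw [sigma_eq 1 (by norm_num) (by norm_num), sigma_eq 3 (by norm_num) (by norm_num)]
  exact braid_far _ _ (by norm_num)

lemma hst_inv : ((σ 2 : BraidGroup 4))⁻¹ * (σ 1)⁻¹ * (σ 2)⁻¹
    = (σ 1)⁻¹ * (σ 2)⁻¹ * (σ 1)⁻¹ := by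
  calc ((σ 2 : BraidGroup 4))⁻¹ * (σ 1)⁻¹ * (σ 2)⁻¹ = (σ 2 * σ 1 * σ 2)⁻¹ := by group
    _ = (σ 1 * σ 2 * σ 1)⁻¹ := by rw [hst]
    _ = (σ 1)⁻¹ * (σ 2)⁻¹ * (σ 1)⁻¹ := by group

/-- the exponent-sum homomorphism -/
def expsum : BraidGroup 4 →* Multiplicative ℤ :=
  PresentedGroup.toGroup (f := fun _ : Fin 3 => Multiplicative.ofAdd 1) (by
    rintro r ⟨i, j, (⟨-, rfl⟩ | ⟨-, rfl⟩)⟩ <;>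
      simp only [map_mul, map_inv, FreeGroup.lift_apply_of] <;> group)

lemma expsum_σ (i : ℕ) (h1 : 1 ≤ i) (h2 : i < 4) :
    expsum (σ i) = Multiplicative.ofAdd 1 := by
  rw [sigma_eq i h1 h2]
  exact PresentedGroup.toGroup.of _

/-- the subgroup generated by the three claimed generators -/
def Hgen : Subgroup (BraidGroup 4) :=
  closure ({σ 1 * (σ 2)⁻¹, σ 1 * (σ 1 * (σ 2)⁻¹) * (σ 1)⁻¹, σ 1 * (σ 3)⁻¹} :
    Set (BraidGroup 4))

lemma ha : σ 1 * (σ 2)⁻¹ ∈ Hgen := subset_closure (by left; rfl)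
lemma hb : σ 1 * (σ 1 * (σ 2)⁻¹) * (σ 1)⁻¹ ∈ Hgen :=
  subset_closure (by right; left; rfl)
lemma hc : σ 1 * (σ 3)⁻¹ ∈ Hgen := subset_closure (by right; right; rfl)

lemma conjA : (σ 1 : BraidGroup 4)⁻¹ * (σ 1 * (σ 2)⁻¹) * σ 1
    = (σ 1 * (σ 1 * (σ 2)⁻¹) * (σ 1)⁻¹)⁻¹ * (σ 1 * (σ 2)⁻¹) := by
  calc (σ 1 : BraidGroup 4)⁻¹ * (σ 1 * (σ 2)⁻¹) * σ 1
      = (σ 2)⁻¹ * (σ 1 * σ 2 * σ 1) * ((σ 1)⁻¹ * (σ 2)⁻¹) := by group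
    _ = (σ 2)⁻¹ * (σ 2 * σ 1 * σ 2) * ((σ 1)⁻¹ * (σ 2)⁻¹) := by rw [hst]
    _ = (σ 1 * (σ 1 * (σ 2)⁻¹) * (σ 1)⁻¹)⁻¹ * (σ 1 * (σ 2)⁻¹) := by group

lemma conjB : (σ 1 : BraidGroup 4) * (σ 1 * (σ 1 * (σ 2)⁻¹) * (σ 1)⁻¹) * (σ 1)⁻¹
    = (σ 1 * (σ 1 * (σ 2)⁻¹) * (σ 1)⁻¹) * (σ 1 * (σ 2)⁻¹)⁻¹ := by
  calc (σ 1 : BraidGroup 4) * (σ 1 * (σ 1 * (σ 2)⁻¹) * (σ 1)⁻¹) * (σ 1)⁻¹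
      = σ 1 * σ 1 * σ 1 * ((σ 2)⁻¹ * (σ 1)⁻¹ * (σ 2)⁻¹) * (σ 2 * (σ 1)⁻¹) := by group
    _ = σ 1 * σ 1 * σ 1 * ((σ 1)⁻¹ * (σ 2)⁻¹ * (σ 1)⁻¹) * (σ 2 * (σ 1)⁻¹) := by rw [hst_inv]
    _ = (σ 1 * (σ 1 * (σ 2)⁻¹) * (σ 1)⁻¹) * (σ 1 * (σ 2)⁻¹)⁻¹ := by group

lemma conjD : (σ 1 : BraidGroup 4) * (σ 1 * (σ 3)⁻¹) * (σ 1)⁻¹ = σ 1 * (σ 3)⁻¹ := by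
  calc (σ 1 : BraidGroup 4) * (σ 1 * (σ 3)⁻¹) * (σ 1)⁻¹
      = σ 1 * (σ 3)⁻¹ * (σ 3 * σ 1) * (σ 3)⁻¹ * (σ 1)⁻¹ := by group
    _ = σ 1 * (σ 3)⁻¹ * (σ 1 * σ 3) * (σ 3)⁻¹ * (σ 1)⁻¹ := by rw [← hsu]
    _ = σ 1 * (σ 3)⁻¹ := by group

lemma conjE : (σ 1 : BraidGroup 4)⁻¹ * (σ 1 * (σ 3)⁻¹) * σ 1 = σ 1 * (σ 3)⁻¹ := by
  calc (σ 1 : BraidGroup 4)⁻¹ * (σ 1 * (σ 3)⁻¹) * σ 1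
      = (σ 3)⁻¹ * (σ 1 * σ 3) * (σ 3)⁻¹ := by group
    _ = (σ 3)⁻¹ * (σ 3 * σ 1) * (σ 3)⁻¹ := by rw [hsu]
    _ = σ 1 * (σ 3)⁻¹ := by group

lemma conj_s {x : BraidGroup 4} (hx : x ∈ Hgen) : σ 1 * x * (σ 1)⁻¹ ∈ Hgen := by
  induction hx using closure_induction with
  | mem y hy =>
    rcases hy with rfl | rfl | rfl
    · exact hb
    · rw [conjB]; exact mul_mem hb (inv_mem ha)
    · rw [conjD]; exact hc
  | one => simpa using Hgen.one_mem
  | mul y z _ _ hy hz =>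
    have e : σ 1 * (y * z) * (σ 1)⁻¹ = (σ 1 * y * (σ 1)⁻¹) * (σ 1 * z * (σ 1)⁻¹) := by group
    rw [e]; exact mul_mem hy hz
  | inv y _ hy =>
    have e : σ 1 * y⁻¹ * (σ 1)⁻¹ = (σ 1 * y * (σ 1)⁻¹)⁻¹ := by group
    rw [e]; exact inv_mem hy

lemma conj_s_inv {x : BraidGroup 4} (hx : x ∈ Hgen) : (σ 1)⁻¹ * x * σ 1 ∈ Hgen := by
  induction hx using closure_induction with
  | mem y hy =>
    rcases hy with rfl | rfl | rfl
    · rw [conjA]; exact mul_mem (inv_mem hb) ha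
    · have e : (σ 1 : BraidGroup 4)⁻¹ * (σ 1 * (σ 1 * (σ 2)⁻¹) * (σ 1)⁻¹) * σ 1
          = σ 1 * (σ 2)⁻¹ := by group
      rw [e]; exact ha
    · rw [conjE]; exact hc
  | one => simpa using Hgen.one_mem
  | mul y z _ _ hy hz =>
    have e : (σ 1)⁻¹ * (y * z) * σ 1 = ((σ 1)⁻¹ * y * σ 1) * ((σ 1)⁻¹ * z * σ 1) := by group
    rw [e]; exact mul_mem hy hz
  | inv y _ hy =>
    have e : (σ 1)⁻¹ * y⁻¹ * σ 1 = ((σ 1)⁻¹ * y * σ 1)⁻¹ := by group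
    rw [e]; exact inv_mem hy

lemma conj_zpow (k : ℤ) {x : BraidGroup 4} (hx : x ∈ Hgen) :
    σ 1 ^ k * x * σ 1 ^ (-k) ∈ Hgen := by
  induction k using Int.induction_on with
  | zero => simpa using hx
  | succ n ih =>
    have e : (σ 1 : BraidGroup 4) ^ ((n : ℤ) + 1) * x * σ 1 ^ (-((n : ℤ) + 1))
        = σ 1 * (σ 1 ^ (n : ℤ) * x * σ 1 ^ (-(n : ℤ))) * (σ 1)⁻¹ := by group
    rw [e]; exact conj_s ih
  | pred n ih =>
    have e : (σ 1 : BraidGroup 4) ^ (-(n : ℤ) - 1) * x * σ 1 ^ (-(-(n : ℤ) - 1))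
        = (σ 1)⁻¹ * (σ 1 ^ (-(n : ℤ)) * x * σ 1 ^ (-(-(n : ℤ)))) * σ 1 := by group
    rw [e]; exact conj_s_inv ih

/-- every element of B4 is (element of Hgen) * σ1^k -/
lemma coset_decomp (g : BraidGroup 4) : ∃ k : ℤ, ∃ h ∈ Hgen, g = h * σ 1 ^ k := by
  let T : Subgroup (BraidGroup 4) :=
    { carrier := {g | ∃ k : ℤ, ∃ h ∈ Hgen, g = h * σ 1 ^ k}
      one_mem' := ⟨0, 1, Hgen.one_mem, by simp⟩
      mul_mem' := by
        rintro g1 g2 ⟨k1, h1, hh1, rfl⟩ ⟨k2, h2, hh2, rfl⟩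
        refine ⟨k1 + k2, h1 * (σ 1 ^ k1 * h2 * σ 1 ^ (-k1)),
          mul_mem hh1 (conj_zpow k1 hh2), ?_⟩
        group
      inv_mem' := by
        rintro g ⟨k, h, hh, rfl⟩
        refine ⟨-k, σ 1 ^ (-k) * h⁻¹ * σ 1 ^ (-(-k)), conj_zpow (-k) (inv_mem hh), ?_⟩
        group }
  have hσ1 : (σ 1 : BraidGroup 4) ∈ T := ⟨1, 1, Hgen.one_mem, by group⟩
  have hσ2 : (σ 2 : BraidGroup 4) ∈ T :=
    ⟨1, (σ 1 * (σ 2)⁻¹)⁻¹, inv_mem ha, by group⟩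
  have hσ3 : (σ 3 : BraidGroup 4) ∈ T :=
    ⟨1, (σ 1 * (σ 3)⁻¹)⁻¹, inv_mem hc, by group⟩
  have hgen : ∀ j : Fin 3, (PresentedGroup.of j : BraidGroup 4) ∈ T := by
    intro j
    fin_cases j
    · exact hσ1
    · exact hσ2
    · exact hσ3
  exact PresentedGroup.generated_by (braidRels 4) T hgen g

lemma expsum_Hgen {h : BraidGroup 4} (hh : h ∈ Hgen) : expsum h = 1 := by
  have : Hgen ≤ expsum.ker := by
    rw [Hgen, closure_le]
    rintro x (rfl | rfl | rfl) <;>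
      simp [MonoidHom.mem_ker, map_mul, map_inv,
        expsum_σ 1 (by norm_num) (by norm_num), expsum_σ 2 (by norm_num) (by norm_num),
        expsum_σ 3 (by norm_num) (by norm_num)]
  exact this hh

lemma abel_st : (Abelianization.of (σ 1 : BraidGroup 4)) = Abelianization.of (σ 2) := by
  have h := congrArg Abelianization.of hst
  rw [map_mul, map_mul, map_mul, map_mul] at h
  rw [mul_comm (Abelianization.of (σ 2)) (Abelianization.of (σ 1))] at h
  exact mul_left_cancel h

lemma abel_tu : (Abelianization.of (σ 2 : BraidGroup 4)) = Abelianization.of (σ 3) := by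
  have h := congrArg Abelianization.of htu
  rw [map_mul, map_mul, map_mul, map_mul] at h
  rw [mul_comm (Abelianization.of (σ 3)) (Abelianization.of (σ 2))] at h
  exact mul_left_cancel h

lemma gens_in_commutator :
    ∀ x ∈ ({σ 1 * (σ 2)⁻¹, σ 1 * (σ 1 * (σ 2)⁻¹) * (σ 1)⁻¹,
        σ 1 * (σ 3)⁻¹} : Set (BraidGroup 4)), x ∈ commutator (BraidGroup 4) := by
  rintro x (rfl | rfl | rfl) <;>
  · rw [← QuotientGroup.eq_one_iff]
    show Abelianization.of _ = 1
    simp only [map_mul, map_inv, abel_st, abel_tu, abel_st.trans abel_tu]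
    group

end B4Aux

theorem B4_commutator_three_generators :
    Subgroup.closure ({σ 1 * (σ 2)⁻¹, σ 1 * (σ 1 * (σ 2)⁻¹) * (σ 1)⁻¹,
        σ 1 * (σ 3)⁻¹} : Set (BraidGroup 4)) = commutator (BraidGroup 4) := by
  apply le_antisymm
  · rw [Subgroup.closure_le]
    exact fun x hx => B4Aux.gens_in_commutator x hx
  · intro g hg
    obtain ⟨k, h, hh, rfl⟩ := B4Aux.coset_decomp g
    have h1 : B4Aux.expsum (h * σ 1 ^ k) = 1 :=
      Abelianization.commutator_subset_ker B4Aux.expsum hg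
    rw [map_mul, map_zpow, B4Aux.expsum_Hgen hh, one_mul,
      B4Aux.expsum_σ 1 (by norm_num) (by norm_num)] at h1
    have hk : k = 0 := by simpa using congrArg Multiplicative.toAdd h1
    subst hk
    simpa [B4Aux.Hgen] using hh
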